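/- Let softplus(x) = log(1 + exp(x)). Let m be a positive integer and a_1,…,a_m, b_1,…,b_m, c_1,…,c_m real numbers such that |b_i| ≠ |b_j| whenever i ≠ j, and such that a_k·b_k ≠ 0 for some k. Then the function f(x) = Σ_{i=1}^m a_i softplus(b_i x + c_i) is not constant on ℝ; that is, there exist x, y ∈ ℝ with f(x) ≠ f(y). -/

import Mathlib

open Filter Real Topology

/-- The softplus (smoothed ReLU) function. -/
noncomputable def softplus (x : ℝ) : ℝ := Real.log (1 + Real.exp x)

lemma softplus_eq (t : ℝ) : softplus t = t + Real.log (1 + Real.exp (-t)) := by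
  unfold softplus
  have h1 : (1:ℝ) + Real.exp t = Real.exp t * (1 + Real.exp (-t)) := by
    rw [mul_add, mul_one, ← Real.exp_add]
    simp [add_comm]
  rw [h1, Real.log_mul (Real.exp_ne_zero t) (by positivity), Real.log_exp]

lemma log_one_add_exp_tendsto : Tendsto (fun t : ℝ => Real.log (1 + Real.exp t)) atBot (nhds 0) := by
  have h1 : Tendsto (fun t : ℝ => 1 + Real.exp t) atBot (nhds 1) := by
    simpa using tendsto_const_nhds.add Real.tendsto_exp_atBot
  have h2 := (Real.continuousAt_log one_ne_zero).tendsto.comp h1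
  simpa [Function.comp_def] using h2

lemma lin_atBot (d e : ℝ) (hd : 0 < d) : Tendsto (fun x : ℝ => -(d*x) + e) atTop atBot := by
  apply tendsto_atBot_add_const_right
  exact tendsto_neg_atBot_iff.2 (tendsto_id.const_mul_atTop hd)

lemma aux_key (d d0 e : ℝ) (h0 : 0 < d0) (hle : d0 ≤ d) :
    Tendsto (fun x => Real.log (1 + Real.exp (-(d*x) + e)) * Real.exp (d0*x)) atTop
      (nhds (if d0 = d then Real.exp e else 0)) := by
  have hd : 0 < d := lt_of_lt_of_le h0 hle
  set u : ℝ → ℝ := fun x => Real.exp (-(d*x)+e) with hu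
  have hu_pos : ∀ x, 0 < u x := fun x => Real.exp_pos _
  have h1u : ∀ x, (0:ℝ) < 1 + u x := fun x => by positivity
  have hupper_eq : ∀ x, u x * Real.exp (d0*x) = Real.exp ((d0-d)*x + e) := by
    intro x; rw [hu, ← Real.exp_add]; ring_nf
  have hlim_upper : Tendsto (fun x => u x * Real.exp (d0*x)) atTop
      (nhds (if d0 = d then Real.exp e else 0)) := by
    simp only [hupper_eq]
    split_ifs with h
    · simp [h]
    · have hneg : d0 - d < 0 := sub_neg.2 (lt_of_le_of_ne hle h)
      apply Real.tendsto_exp_atBot.comp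
      apply tendsto_atBot_add_const_right
      exact Tendsto.const_mul_atTop_of_neg hneg tendsto_id
  have hu0 : Tendsto u atTop (nhds 0) := by
    apply Real.tendsto_exp_atBot.comp
    exact lin_atBot d e hd
  have hden : Tendsto (fun x => 1 + u x) atTop (nhds 1) := by
    simpa using tendsto_const_nhds.add hu0
  have hlim_lower : Tendsto (fun x => u x * Real.exp (d0*x) / (1 + u x)) atTop
      (nhds (if d0 = d then Real.exp e else 0)) := by
    have h := hlim_upper.div hden one_ne_zero
    rw [div_one] at h
    exact h
  apply tendsto_of_tendsto_of_tendsto_of_le_of_le hlim_lower hlim_upper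
  · intro x
    have hlog : u x / (1 + u x) ≤ Real.log (1 + u x) := by
      have h2 := Real.log_le_sub_one_of_pos (inv_pos.2 (h1u x))
      rw [Real.log_inv] at h2
      have h3 : u x / (1 + u x) = 1 - (1 + u x)⁻¹ := by
        rw [eq_sub_iff_add_eq, inv_eq_one_div, ← add_div, add_comm (u x) 1, div_self (h1u x).ne']
      linarith
    calc u x * Real.exp (d0*x) / (1 + u x)
        = u x / (1 + u x) * Real.exp (d0*x) := by ring
      _ ≤ Real.log (1 + u x) * Real.exp (d0*x) :=
          mul_le_mul_of_nonneg_right hlog (Real.exp_nonneg _)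
  · intro x
    have hlog : Real.log (1 + u x) ≤ u x := by
      have := Real.log_le_sub_one_of_pos (h1u x)
      linarith
    exact mul_le_mul_of_nonneg_right hlog (Real.exp_nonneg _)

/-- A nontrivial finite linear combination of softplus functions with slopes of
pairwise distinct absolute values is not a constant function. -/
theorem stmt_18 (m : ℕ) (hm : 0 < m) (a b c : Fin m → ℝ)
    (hb : ∀ i j, i ≠ j → |b i| ≠ |b j|)
    (hk : ∃ k, a k * b k ≠ 0) :
    ∃ x y : ℝ,
      (∑ i, a i * softplus (b i * x + c i)) ≠ (∑ i, a i * softplus (b i * y + c i)) := by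
  by_contra hcon
  push_neg at hcon
  set F : ℝ → ℝ := fun x => ∑ i, a i * softplus (b i * x + c i) with hFdef
  have hF : ∀ x, F x = F 0 := fun x => hcon x 0
  -- linear asymptote data
  set p : Fin m → ℝ := fun i => if 0 < b i then b i else 0 with hp
  set q : Fin m → ℝ := fun i => if 0 < b i then c i else if b i = 0 then softplus (c i) else 0 with hq
  set L : ℝ := ∑ i, a i * p i with hL
  set D : ℝ := ∑ i, a i * q i with hD
  set term : Fin m → ℝ → ℝ := fun i x => softplus (b i * x + c i) - (p i * x + q i) with hterm
  -- each term tends to 0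
  have claim1 : ∀ i, Tendsto (fun x => term i x) atTop (nhds 0) := by
    intro i
    rcases lt_trichotomy (b i) 0 with hbi | hbi | hbi
    · have : ∀ x, term i x = Real.log (1 + Real.exp (-((-(b i))*x) + c i)) := by
        intro x
        simp only [hterm, hp, hq, if_neg (not_lt.2 hbi.le), if_neg hbi.ne]
        unfold softplus; ring_nf
      simp only [this]
      have := log_one_add_exp_tendsto.comp (lin_atBot (-(b i)) (c i) (by linarith))
      simpa [Function.comp_def] using this
    · have : ∀ x, term i x = 0 := by
        intro x
        simp [hterm, hp, hq, hbi]
      simp only [this]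
      exact tendsto_const_nhds
    · have : ∀ x, term i x = Real.log (1 + Real.exp (-(b i * x) + (-(c i)))) := by
        intro x
        simp only [hterm, hp, hq, if_pos hbi]
        rw [softplus_eq]; ring_nf
      simp only [this]
      have := log_one_add_exp_tendsto.comp (lin_atBot (b i) (-(c i)) hbi)
      simpa [Function.comp_def] using this
  have hsum : ∀ x, (∑ i, a i * term i x) = F x - (L * x + D) := by
    intro x
    have h1 : ∀ i : Fin m, a i * term i x
        = a i * softplus (b i * x + c i) - ((a i * p i) * x + a i * q i) := by
      intro i; simp only [hterm]; ring
    rw [Finset.sum_congr rfl (fun i _ => h1 i), Finset.sum_sub_distrib,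
      Finset.sum_add_distrib, ← Finset.sum_mul]
  have hsum_lim : Tendsto (fun x => ∑ i, a i * term i x) atTop (nhds 0) := by
    have := tendsto_finset_sum Finset.univ (fun i _ => (claim1 i).const_mul (a i))
    simpa using this
  -- L = 0
  have hLx : Tendsto (fun x : ℝ => L * x) atTop (nhds (F 0 - D)) := by
    have h1 : Tendsto (fun x => F 0 - (L * x + D)) atTop (nhds 0) := by
      have := hsum_lim
      simp only [hsum, hF] at this
      exact this
    have h2 := (tendsto_const_nhds (x := F 0 - D)).sub h1
    simpa using h2
  have hL0 : L = 0 := by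
    by_contra hL0
    rcases lt_or_gt_of_ne hL0 with h | h
    · have : Tendsto (fun x : ℝ => L * x) atTop atBot :=
        Tendsto.const_mul_atTop_of_neg h tendsto_id
      exact not_tendsto_nhds_of_tendsto_atBot this _ hLx
    · have : Tendsto (fun x : ℝ => L * x) atTop atTop :=
        tendsto_id.const_mul_atTop h
      exact not_tendsto_nhds_of_tendsto_atTop this _ hLx
  have hD0 : D = F 0 := by
    have := hLx
    simp only [hL0, zero_mul] at this
    have h2 := tendsto_nhds_unique (tendsto_const_nhds (x := (0:ℝ))) this
    linarith
  have hzero : ∀ x, (∑ i, a i * term i x) = 0 := by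
    intro x
    rw [hsum, hF x, ← hD0, hL0]
    ring
  -- pick the minimizing index
  set T : Finset (Fin m) := Finset.univ.filter (fun i => a i ≠ 0 ∧ b i ≠ 0) with hT
  have hTne : T.Nonempty := by
    obtain ⟨k, hk⟩ := hk
    exact ⟨k, by simp [hT, left_ne_zero_of_mul hk, right_ne_zero_of_mul hk]⟩
  obtain ⟨i0, hi0T, hi0min⟩ := T.exists_min_image (fun i => |b i|) hTne
  have hi0 : a i0 ≠ 0 ∧ b i0 ≠ 0 := by simpa [hT] using hi0T
  set d0 : ℝ := |b i0| with hd0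
  have hd0pos : 0 < d0 := abs_pos.2 hi0.2
  set E : ℝ := if 0 < b i0 then -c i0 else c i0 with hE
  set V : ℝ := a i0 * Real.exp E with hV
  -- per-term limits after multiplying by exp(d0 x)
  have claim2 : ∀ i, Tendsto (fun x => a i * term i x * Real.exp (d0 * x)) atTop
      (nhds (if i = i0 then V else 0)) := by
    intro i
    rcases eq_or_ne (a i) 0 with hai | hai
    · have hne : i ≠ i0 := fun h => hi0.1 (h ▸ hai)
      simp only [hai, zero_mul, if_neg hne]
      exact tendsto_const_nhds
    rcases eq_or_ne (b i) 0 with hbi | hbi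
    · have hne : i ≠ i0 := fun h => hi0.2 (h ▸ hbi)
      have hz : ∀ x, term i x = 0 := by intro x; simp [hterm, hp, hq, hbi]
      simp only [hz, mul_zero, zero_mul, if_neg hne]
      exact tendsto_const_nhds
    · -- i ∈ T
      have hiT : i ∈ T := by simp [hT, hai, hbi]
      have hge : d0 ≤ |b i| := hi0min i hiT
      have hiff : (d0 = |b i|) ↔ (i = i0) := by
        constructor
        · intro h
          by_contra hne
          exact hb i i0 hne (h.symm.trans hd0)
        · intro h; rw [h]
      rcases lt_trichotomy (b i) 0 with hbi' | hbi' | hbi'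
      · have hrw : ∀ x, term i x = Real.log (1 + Real.exp (-((-(b i))*x) + c i)) := by
          intro x
          simp only [hterm, hp, hq, if_neg (not_lt.2 hbi'.le), if_neg hbi]
          unfold softplus; ring_nf
        have habs : |b i| = -(b i) := abs_of_neg hbi'
        have hkey := aux_key (-(b i)) d0 (c i) hd0pos (habs ▸ hge)
        have hlim := hkey.const_mul (a i)
        have hval : (if i = i0 then V else 0)
            = a i * (if d0 = -b i then Real.exp (c i) else 0) := by
          by_cases h : i = i0
          · have hcond : d0 = -b i := by rw [hd0, ← h]; exact habs
            rw [if_pos h, if_pos hcond, hV, hE, ← h, if_neg (not_lt.2 hbi'.le)]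
          · rw [if_neg h, if_neg (fun hc => h (hiff.1 (hc.trans habs.symm))), mul_zero]
        rw [hval]
        simp only [hrw]
        simpa only [mul_assoc] using hlim
      · exact absurd hbi' hbi
      · have hrw : ∀ x, term i x = Real.log (1 + Real.exp (-(b i * x) + (-(c i)))) := by
          intro x
          simp only [hterm, hp, hq, if_pos hbi']
          rw [softplus_eq]; ring_nf
        have habs : |b i| = b i := abs_of_pos hbi'
        have hkey := aux_key (b i) d0 (-(c i)) hd0pos (habs ▸ hge)
        have hlim := hkey.const_mul (a i)
        have hval : (if i = i0 then V else 0)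
            = a i * (if d0 = b i then Real.exp (-c i) else 0) := by
          by_cases h : i = i0
          · have hcond : d0 = b i := by rw [hd0, ← h]; exact habs
            rw [if_pos h, if_pos hcond, hV, hE, ← h, if_pos hbi']
          · rw [if_neg h, if_neg (fun hc => h (hiff.1 (hc.trans habs.symm))), mul_zero]
        rw [hval]
        simp only [hrw]
        simpa only [mul_assoc] using hlim
  -- sum of claim2 limits
  have hsum2 : Tendsto (fun x => ∑ i, a i * term i x * Real.exp (d0 * x)) atTop (nhds V) := by
    have := tendsto_finset_sum Finset.univ (fun i _ => claim2 i)
    have hs : (∑ i, if i = i0 then V else 0) = V := by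
      simp [Finset.sum_ite_eq']
    rw [hs] at this
    exact this
  have hzero2 : ∀ x, (∑ i, a i * term i x * Real.exp (d0 * x)) = 0 := by
    intro x
    rw [← Finset.sum_mul, hzero x, zero_mul]
  have : V = 0 := by
    have h0 : Tendsto (fun x => ∑ i, a i * term i x * Real.exp (d0 * x)) atTop (nhds 0) := by
      simp only [hzero2]; exact tendsto_const_nhds
    exact tendsto_nhds_unique hsum2 h0
  rw [hV] at this
  exact hi0.1 (by
    rcases mul_eq_zero.1 this with h | h
    · exact h
    · exact absurd h (Real.exp_ne_zero _))
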